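/- Let u, v, w ∈ ℝ^N, φ_{abc} = u_a·v_b·w_c, D = λ_d + λ_p·N·(α₁+α₂+α₃) + λ_t·N^{3/2}, and assume the solution condition λ₂ + (D/N³)·|u|²·|v|²·|w|² = 0. Then the Hessian of V at φ annihilates the Goldstone directions: for any u' ∈ ℝ^N with ⟨u',u⟩ = 0, H(φ)(u'⊗v⊗w) = 0; for any v' with ⟨v',v⟩ = 0, H(φ)(u⊗v'⊗w) = 0; and for any w' with ⟨w',w⟩ = 0, H(φ)(u⊗v⊗w') = 0. -/

import Mathlib

open Finset

/-- The potential of the quartic `O(N)^3` tensor model. -/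
noncomputable def potV (N : ℕ) (l2 ld lp lt a1 a2 a3 : ℝ)
    (φ : Fin N → Fin N → Fin N → ℝ) : ℝ :=
  l2 / 2 * (∑ a, ∑ b, ∑ c, (φ a b c) ^ 2)
  + ld / (4 * (N : ℝ) ^ 3) * (∑ a, ∑ b, ∑ c, (φ a b c) ^ 2) ^ 2
  + lp / (4 * (N : ℝ) ^ 2) *
      (a1 * ∑ a, ∑ b, ∑ c, ∑ a', ∑ b', ∑ c',
          φ a b c * φ a b' c' * φ a' b' c' * φ a' b c
       + a2 * ∑ a, ∑ b, ∑ c, ∑ a', ∑ b', ∑ c',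
          φ a b c * φ a' b c' * φ a' b' c' * φ a b' c
       + a3 * ∑ a, ∑ b, ∑ c, ∑ a', ∑ b', ∑ c',
          φ a b c * φ a' b' c * φ a' b' c' * φ a b c')
  + lt / (4 * (N : ℝ) ^ ((3 : ℝ) / 2)) *
      ∑ a, ∑ b, ∑ c, ∑ a', ∑ b', ∑ c',
        φ a b c * φ a b' c' * φ a' b c' * φ a' b' c

/-- The field equations of the quartic `O(N)^3` tensor model (vanishing gradient of `potV`). -/
def FieldEqs (N : ℕ) (l2 ld lp lt a1 a2 a3 : ℝ)
    (φ : Fin N → Fin N → Fin N → ℝ) : Prop :=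
  ∀ a b c,
    l2 * φ a b c
    + ld / (N : ℝ) ^ 3 * (∑ a', ∑ b', ∑ c', (φ a' b' c') ^ 2) * φ a b c
    + lp / (N : ℝ) ^ 2 *
        (a1 * ∑ a', ∑ b', ∑ c', φ a b' c' * φ a' b' c' * φ a' b c
         + a2 * ∑ a', ∑ b', ∑ c', φ a' b c' * φ a' b' c' * φ a b' c
         + a3 * ∑ a', ∑ b', ∑ c', φ a' b' c * φ a' b' c' * φ a b c')
    + lt / (N : ℝ) ^ ((3 : ℝ) / 2) *
        ∑ a', ∑ b', ∑ c', φ a b' c' * φ a' b c' * φ a' b' c = 0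

/-- The Hessian of `potV` at `φ` (the matrix of second partial derivatives
`H(φ)_{abc,a'b'c'} = ∂²V/∂φ_{abc}∂φ_{a'b'c'}`), acting on a tensor field `χ` by
`(H(φ)χ)_{abc} = Σ_{a'b'c'} H(φ)_{abc,a'b'c'} χ_{a'b'c'}`. -/
noncomputable def hessApply (N : ℕ) (l2 ld lp lt a1 a2 a3 : ℝ)
    (φ χ : Fin N → Fin N → Fin N → ℝ) : Fin N → Fin N → Fin N → ℝ :=
  fun a b c =>
    deriv (fun s : ℝ =>
      deriv (fun t : ℝ =>
        potV N l2 ld lp lt a1 a2 a3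
          (fun a' b' c' => φ a' b' c' + t * χ a' b' c'
            + s * (if a' = a ∧ b' = b ∧ c' = c then (1 : ℝ) else 0))) 0) 0


namespace TensorAux

variable {N : ℕ}

def cS2 (φ : Fin N → Fin N → Fin N → ℝ) : ℝ :=
  ∑ i : Fin N × Fin N × Fin N, (φ i.1 i.2.1 i.2.2) ^ 2
def cB (φ χ : Fin N → Fin N → Fin N → ℝ) : ℝ :=
  ∑ i : Fin N × Fin N × Fin N, φ i.1 i.2.1 i.2.2 * χ i.1 i.2.1 i.2.2
def cP1 (f1 f2 f3 f4 : Fin N → Fin N → Fin N → ℝ) : ℝ :=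
  ∑ i : (Fin N × Fin N × Fin N) × (Fin N × Fin N × Fin N),
    f1 i.1.1 i.1.2.1 i.1.2.2 * f2 i.1.1 i.2.2.1 i.2.2.2
      * f3 i.2.1 i.2.2.1 i.2.2.2 * f4 i.2.1 i.1.2.1 i.1.2.2
def cP2 (f1 f2 f3 f4 : Fin N → Fin N → Fin N → ℝ) : ℝ :=
  ∑ i : (Fin N × Fin N × Fin N) × (Fin N × Fin N × Fin N),
    f1 i.1.1 i.1.2.1 i.1.2.2 * f2 i.2.1 i.1.2.1 i.2.2.2
      * f3 i.2.1 i.2.2.1 i.2.2.2 * f4 i.1.1 i.2.2.1 i.1.2.2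
def cP3 (f1 f2 f3 f4 : Fin N → Fin N → Fin N → ℝ) : ℝ :=
  ∑ i : (Fin N × Fin N × Fin N) × (Fin N × Fin N × Fin N),
    f1 i.1.1 i.1.2.1 i.1.2.2 * f2 i.2.1 i.2.2.1 i.1.2.2
      * f3 i.2.1 i.2.2.1 i.2.2.2 * f4 i.1.1 i.1.2.1 i.2.2.2
def cT (f1 f2 f3 f4 : Fin N → Fin N → Fin N → ℝ) : ℝ :=
  ∑ i : (Fin N × Fin N × Fin N) × (Fin N × Fin N × Fin N),
    f1 i.1.1 i.1.2.1 i.1.2.2 * f2 i.1.1 i.2.2.1 i.2.2.2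
      * f3 i.2.1 i.1.2.1 i.2.2.2 * f4 i.2.1 i.2.2.1 i.1.2.2

lemma potV_eq (l2 ld lp lt a1 a2 a3 : ℝ) (φ : Fin N → Fin N → Fin N → ℝ) :
    potV N l2 ld lp lt a1 a2 a3 φ
      = l2 / 2 * cS2 φ + ld / (4 * (N : ℝ) ^ 3) * (cS2 φ) ^ 2
        + lp / (4 * (N : ℝ) ^ 2) *
            (a1 * cP1 φ φ φ φ + a2 * cP2 φ φ φ φ + a3 * cP3 φ φ φ φ)
        + lt / (4 * (N : ℝ) ^ ((3 : ℝ) / 2)) * cT φ φ φ φ := by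
  simp [potV, cS2, cP1, cP2, cP3, cT, Fintype.sum_prod_type]

lemma sum3 (A B C : Fin N → ℝ) :
    ∑ i : Fin N × Fin N × Fin N, A i.1 * B i.2.1 * C i.2.2
      = (∑ a, A a) * (∑ a, B a) * (∑ a, C a) := by
  simp only [Fintype.sum_prod_type]
  simp only [← Finset.sum_mul, ← Finset.mul_sum]

lemma sum6 (A B C D E F : Fin N → ℝ) :
    ∑ i : (Fin N × Fin N × Fin N) × (Fin N × Fin N × Fin N),
        A i.1.1 * B i.1.2.1 * C i.1.2.2 * D i.2.1 * E i.2.2.1 * F i.2.2.2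
      = (∑ a, A a) * (∑ a, B a) * (∑ a, C a) * (∑ a, D a) * (∑ a, E a) * (∑ a, F a) := by
  simp only [Fintype.sum_prod_type]
  simp only [← Finset.sum_mul, ← Finset.mul_sum]

lemma cB_eval (x1 y1 z1 x2 y2 z2 : Fin N → ℝ) :
    cB (fun a b c => x1 a * y1 b * z1 c) (fun a b c => x2 a * y2 b * z2 c)
      = (∑ a, x1 a * x2 a) * (∑ b, y1 b * y2 b) * (∑ c, z1 c * z2 c) := by
  rw [← sum3 (fun a => x1 a * x2 a) (fun b => y1 b * y2 b) (fun c => z1 c * z2 c)]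
  exact Finset.sum_congr rfl fun i _ => by ring

lemma cS2_eval (x y z : Fin N → ℝ) :
    cS2 (fun a b c => x a * y b * z c)
      = (∑ a, x a ^ 2) * (∑ b, y b ^ 2) * (∑ c, z c ^ 2) := by
  rw [← sum3 (fun a => x a ^ 2) (fun b => y b ^ 2) (fun c => z c ^ 2)]
  exact Finset.sum_congr rfl fun i _ => by ring

lemma cP1_eval (x1 y1 z1 x2 y2 z2 x3 y3 z3 x4 y4 z4 : Fin N → ℝ) :
    cP1 (fun a b c => x1 a * y1 b * z1 c) (fun a b c => x2 a * y2 b * z2 c)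
        (fun a b c => x3 a * y3 b * z3 c) (fun a b c => x4 a * y4 b * z4 c)
      = (∑ a, x1 a * x2 a) * (∑ b, y1 b * y4 b) * (∑ c, z1 c * z4 c)
        * (∑ a, x3 a * x4 a) * (∑ b, y2 b * y3 b) * (∑ c, z2 c * z3 c) := by
  rw [← sum6 (fun a => x1 a * x2 a) (fun b => y1 b * y4 b) (fun c => z1 c * z4 c)
    (fun a => x3 a * x4 a) (fun b => y2 b * y3 b) (fun c => z2 c * z3 c)]
  exact Finset.sum_congr rfl fun i _ => by ring

lemma cP2_eval (x1 y1 z1 x2 y2 z2 x3 y3 z3 x4 y4 z4 : Fin N → ℝ) :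
    cP2 (fun a b c => x1 a * y1 b * z1 c) (fun a b c => x2 a * y2 b * z2 c)
        (fun a b c => x3 a * y3 b * z3 c) (fun a b c => x4 a * y4 b * z4 c)
      = (∑ a, x1 a * x4 a) * (∑ b, y1 b * y2 b) * (∑ c, z1 c * z4 c)
        * (∑ a, x2 a * x3 a) * (∑ b, y3 b * y4 b) * (∑ c, z2 c * z3 c) := by
  rw [← sum6 (fun a => x1 a * x4 a) (fun b => y1 b * y2 b) (fun c => z1 c * z4 c)
    (fun a => x2 a * x3 a) (fun b => y3 b * y4 b) (fun c => z2 c * z3 c)]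
  exact Finset.sum_congr rfl fun i _ => by ring

lemma cP3_eval (x1 y1 z1 x2 y2 z2 x3 y3 z3 x4 y4 z4 : Fin N → ℝ) :
    cP3 (fun a b c => x1 a * y1 b * z1 c) (fun a b c => x2 a * y2 b * z2 c)
        (fun a b c => x3 a * y3 b * z3 c) (fun a b c => x4 a * y4 b * z4 c)
      = (∑ a, x1 a * x4 a) * (∑ b, y1 b * y4 b) * (∑ c, z1 c * z2 c)
        * (∑ a, x2 a * x3 a) * (∑ b, y2 b * y3 b) * (∑ c, z3 c * z4 c) := by
  rw [← sum6 (fun a => x1 a * x4 a) (fun b => y1 b * y4 b) (fun c => z1 c * z2 c)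
    (fun a => x2 a * x3 a) (fun b => y2 b * y3 b) (fun c => z3 c * z4 c)]
  exact Finset.sum_congr rfl fun i _ => by ring

lemma cT_eval (x1 y1 z1 x2 y2 z2 x3 y3 z3 x4 y4 z4 : Fin N → ℝ) :
    cT (fun a b c => x1 a * y1 b * z1 c) (fun a b c => x2 a * y2 b * z2 c)
        (fun a b c => x3 a * y3 b * z3 c) (fun a b c => x4 a * y4 b * z4 c)
      = (∑ a, x1 a * x2 a) * (∑ b, y1 b * y3 b) * (∑ c, z1 c * z4 c)
        * (∑ a, x3 a * x4 a) * (∑ b, y2 b * y4 b) * (∑ c, z2 c * z3 c) := by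
  rw [← sum6 (fun a => x1 a * x2 a) (fun b => y1 b * y3 b) (fun c => z1 c * z4 c)
    (fun a => x3 a * x4 a) (fun b => y2 b * y4 b) (fun c => z2 c * z3 c)]
  exact Finset.sum_congr rfl fun i _ => by ring



lemma hd_affine (a b : ℝ) : HasDerivAt (fun t : ℝ => a + t * b) b 0 := by
  simpa using (hasDerivAt_mul_const (x := (0:ℝ)) b).const_add a

lemma hd_sum_sq {ι : Type*} [Fintype ι] (f g : ι → ℝ) :
    HasDerivAt (fun t : ℝ => ∑ i, (f i + t * g i) ^ 2) (2 * ∑ i, f i * g i) 0 := by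
  have h : ∀ i : ι, HasDerivAt (fun t : ℝ => (f i + t * g i) ^ 2) (2 * (f i * g i)) 0 := by
    intro i
    have H := (hd_affine (f i) (g i)).fun_pow 2
    refine H.congr_deriv (Eq.symm ?_)
    norm_num
    ring
  have H := HasDerivAt.fun_sum (fun i (_ : i ∈ Finset.univ) => h i)
  simpa [← Finset.mul_sum] using H

lemma hd_sum_lin {ι : Type*} [Fintype ι] (f g h : ι → ℝ) :
    HasDerivAt (fun t : ℝ => ∑ i, (f i + t * g i) * h i) (∑ i, g i * h i) 0 := by
  have hh : ∀ i : ι, HasDerivAt (fun t : ℝ => (f i + t * g i) * h i) (g i * h i) 0 := by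
    intro i
    simpa using (hd_affine (f i) (g i)).mul_const (h i)
  exact HasDerivAt.fun_sum (fun i _ => hh i)

lemma hd_sum_quad {ι : Type*} [Fintype ι] (f1 f2 f3 f4 g1 g2 g3 g4 : ι → ℝ) :
    HasDerivAt (fun t : ℝ => ∑ i,
        (f1 i + t * g1 i) * (f2 i + t * g2 i) * (f3 i + t * g3 i) * (f4 i + t * g4 i))
      ((∑ i, g1 i * f2 i * f3 i * f4 i) + (∑ i, f1 i * g2 i * f3 i * f4 i)
        + (∑ i, f1 i * f2 i * g3 i * f4 i) + (∑ i, f1 i * f2 i * f3 i * g4 i)) 0 := by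
  have h : ∀ i : ι, HasDerivAt (fun t : ℝ =>
      (f1 i + t * g1 i) * (f2 i + t * g2 i) * (f3 i + t * g3 i) * (f4 i + t * g4 i))
      (g1 i * f2 i * f3 i * f4 i + f1 i * g2 i * f3 i * f4 i
        + f1 i * f2 i * g3 i * f4 i + f1 i * f2 i * f3 i * g4 i) 0 := by
    intro i
    have H := (((hd_affine (f1 i) (g1 i)).fun_mul (hd_affine (f2 i) (g2 i))).fun_mul
      (hd_affine (f3 i) (g3 i))).fun_mul (hd_affine (f4 i) (g4 i))
    refine H.congr_deriv (Eq.symm ?_)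
    norm_num
    ring
  have H := HasDerivAt.fun_sum (fun i (_ : i ∈ Finset.univ) => h i)
  simpa [Finset.sum_add_distrib] using H

lemma hd_sum_quad1 {ι : Type*} [Fintype ι] (c1 f2 f3 f4 g2 g3 g4 : ι → ℝ) :
    HasDerivAt (fun t : ℝ => ∑ i,
        c1 i * (f2 i + t * g2 i) * (f3 i + t * g3 i) * (f4 i + t * g4 i))
      ((∑ i, c1 i * g2 i * f3 i * f4 i)
        + (∑ i, c1 i * f2 i * g3 i * f4 i) + (∑ i, c1 i * f2 i * f3 i * g4 i)) 0 := by
  have h : ∀ i : ι, HasDerivAt (fun t : ℝ =>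
      c1 i * (f2 i + t * g2 i) * (f3 i + t * g3 i) * (f4 i + t * g4 i))
      (c1 i * g2 i * f3 i * f4 i + c1 i * f2 i * g3 i * f4 i + c1 i * f2 i * f3 i * g4 i) 0 := by
    intro i
    have H := ((((hasDerivAt_const (0:ℝ) (c1 i)).fun_mul (hd_affine (f2 i) (g2 i))).fun_mul
      (hd_affine (f3 i) (g3 i))).fun_mul (hd_affine (f4 i) (g4 i)))
    refine H.congr_deriv (Eq.symm ?_)
    norm_num
    ring
  have H := HasDerivAt.fun_sum (fun i (_ : i ∈ Finset.univ) => h i)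
  simpa [Finset.sum_add_distrib] using H

lemma hd_sum_quad2 {ι : Type*} [Fintype ι] (f1 c2 f3 f4 g1 g3 g4 : ι → ℝ) :
    HasDerivAt (fun t : ℝ => ∑ i,
        (f1 i + t * g1 i) * c2 i * (f3 i + t * g3 i) * (f4 i + t * g4 i))
      ((∑ i, g1 i * c2 i * f3 i * f4 i)
        + (∑ i, f1 i * c2 i * g3 i * f4 i) + (∑ i, f1 i * c2 i * f3 i * g4 i)) 0 := by
  have h : ∀ i : ι, HasDerivAt (fun t : ℝ =>
      (f1 i + t * g1 i) * c2 i * (f3 i + t * g3 i) * (f4 i + t * g4 i))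
      (g1 i * c2 i * f3 i * f4 i + f1 i * c2 i * g3 i * f4 i + f1 i * c2 i * f3 i * g4 i) 0 := by
    intro i
    have H := ((((hd_affine (f1 i) (g1 i)).mul_const (c2 i)).fun_mul
      (hd_affine (f3 i) (g3 i))).fun_mul (hd_affine (f4 i) (g4 i)))
    refine H.congr_deriv (Eq.symm ?_)
    norm_num
    ring
  have H := HasDerivAt.fun_sum (fun i (_ : i ∈ Finset.univ) => h i)
  simpa [Finset.sum_add_distrib] using H

lemma hd_sum_quad3 {ι : Type*} [Fintype ι] (f1 f2 c3 f4 g1 g2 g4 : ι → ℝ) :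
    HasDerivAt (fun t : ℝ => ∑ i,
        (f1 i + t * g1 i) * (f2 i + t * g2 i) * c3 i * (f4 i + t * g4 i))
      ((∑ i, g1 i * f2 i * c3 i * f4 i)
        + (∑ i, f1 i * g2 i * c3 i * f4 i) + (∑ i, f1 i * f2 i * c3 i * g4 i)) 0 := by
  have h : ∀ i : ι, HasDerivAt (fun t : ℝ =>
      (f1 i + t * g1 i) * (f2 i + t * g2 i) * c3 i * (f4 i + t * g4 i))
      (g1 i * f2 i * c3 i * f4 i + f1 i * g2 i * c3 i * f4 i + f1 i * f2 i * c3 i * g4 i) 0 := by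
    intro i
    have H := ((((hd_affine (f1 i) (g1 i)).fun_mul (hd_affine (f2 i) (g2 i))).mul_const
      (c3 i)).fun_mul (hd_affine (f4 i) (g4 i)))
    refine H.congr_deriv (Eq.symm ?_)
    norm_num
    ring
  have H := HasDerivAt.fun_sum (fun i (_ : i ∈ Finset.univ) => h i)
  simpa [Finset.sum_add_distrib] using H

lemma hd_sum_quad4 {ι : Type*} [Fintype ι] (f1 f2 f3 c4 g1 g2 g3 : ι → ℝ) :
    HasDerivAt (fun t : ℝ => ∑ i,
        (f1 i + t * g1 i) * (f2 i + t * g2 i) * (f3 i + t * g3 i) * c4 i)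
      ((∑ i, g1 i * f2 i * f3 i * c4 i)
        + (∑ i, f1 i * g2 i * f3 i * c4 i) + (∑ i, f1 i * f2 i * g3 i * c4 i)) 0 := by
  have h : ∀ i : ι, HasDerivAt (fun t : ℝ =>
      (f1 i + t * g1 i) * (f2 i + t * g2 i) * (f3 i + t * g3 i) * c4 i)
      (g1 i * f2 i * f3 i * c4 i + f1 i * g2 i * f3 i * c4 i + f1 i * f2 i * g3 i * c4 i) 0 := by
    intro i
    have H := ((((hd_affine (f1 i) (g1 i)).fun_mul (hd_affine (f2 i) (g2 i))).fun_mul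
      (hd_affine (f3 i) (g3 i))).mul_const (c4 i))
    refine H.congr_deriv (Eq.symm ?_)
    norm_num
    ring
  have H := HasDerivAt.fun_sum (fun i (_ : i ∈ Finset.univ) => h i)
  simpa [Finset.sum_add_distrib] using H


variable (l2 ld lp lt a1 a2 a3 : ℝ)

noncomputable def gradE (φ χ : Fin N → Fin N → Fin N → ℝ) : ℝ :=
  l2 / 2 * (2 * cB φ χ)
  + ld / (4 * (N : ℝ) ^ 3) * (2 * cS2 φ * (2 * cB φ χ))
  + lp / (4 * (N : ℝ) ^ 2) *
      (a1 * (cP1 χ φ φ φ + cP1 φ χ φ φ + cP1 φ φ χ φ + cP1 φ φ φ χ)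
       + a2 * (cP2 χ φ φ φ + cP2 φ χ φ φ + cP2 φ φ χ φ + cP2 φ φ φ χ)
       + a3 * (cP3 χ φ φ φ + cP3 φ χ φ φ + cP3 φ φ χ φ + cP3 φ φ φ χ))
  + lt / (4 * (N : ℝ) ^ ((3 : ℝ) / 2)) *
      (cT χ φ φ φ + cT φ χ φ φ + cT φ φ χ φ + cT φ φ φ χ)

noncomputable def hessE (φ χ δ : Fin N → Fin N → Fin N → ℝ) : ℝ :=
  l2 / 2 * (2 * cB δ χ)
  + ld / (4 * (N : ℝ) ^ 3) *
      (2 * (2 * cB φ δ) * (2 * cB φ χ) + 2 * cS2 φ * (2 * cB δ χ))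
  + lp / (4 * (N : ℝ) ^ 2) *
      (a1 * ((cP1 χ δ φ φ + cP1 χ φ δ φ + cP1 χ φ φ δ)
           + (cP1 δ χ φ φ + cP1 φ χ δ φ + cP1 φ χ φ δ)
           + (cP1 δ φ χ φ + cP1 φ δ χ φ + cP1 φ φ χ δ)
           + (cP1 δ φ φ χ + cP1 φ δ φ χ + cP1 φ φ δ χ))
       + a2 * ((cP2 χ δ φ φ + cP2 χ φ δ φ + cP2 χ φ φ δ)
           + (cP2 δ χ φ φ + cP2 φ χ δ φ + cP2 φ χ φ δ)
           + (cP2 δ φ χ φ + cP2 φ δ χ φ + cP2 φ φ χ δ)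
           + (cP2 δ φ φ χ + cP2 φ δ φ χ + cP2 φ φ δ χ))
       + a3 * ((cP3 χ δ φ φ + cP3 χ φ δ φ + cP3 χ φ φ δ)
           + (cP3 δ χ φ φ + cP3 φ χ δ φ + cP3 φ χ φ δ)
           + (cP3 δ φ χ φ + cP3 φ δ χ φ + cP3 φ φ χ δ)
           + (cP3 δ φ φ χ + cP3 φ δ φ χ + cP3 φ φ δ χ)))
  + lt / (4 * (N : ℝ) ^ ((3 : ℝ) / 2)) *
      ((cT χ δ φ φ + cT χ φ δ φ + cT χ φ φ δ)
       + (cT δ χ φ φ + cT φ χ δ φ + cT φ χ φ δ)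
       + (cT δ φ χ φ + cT φ δ χ φ + cT φ φ χ δ)
       + (cT δ φ φ χ + cT φ δ φ χ + cT φ φ δ χ))

lemma hd_inner (φ χ : Fin N → Fin N → Fin N → ℝ) :
    HasDerivAt (fun t : ℝ => potV N l2 ld lp lt a1 a2 a3
        (fun a b c => φ a b c + t * χ a b c))
      (gradE l2 ld lp lt a1 a2 a3 φ χ) 0 := by
  have e : (fun t : ℝ => potV N l2 ld lp lt a1 a2 a3
      (fun a b c => φ a b c + t * χ a b c))
      = (fun t : ℝ =>
          l2 / 2 * cS2 (fun a b c => φ a b c + t * χ a b c)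
          + ld / (4 * (N : ℝ) ^ 3) * (cS2 (fun a b c => φ a b c + t * χ a b c)) ^ 2
          + lp / (4 * (N : ℝ) ^ 2) *
              (a1 * cP1 (fun a b c => φ a b c + t * χ a b c) (fun a b c => φ a b c + t * χ a b c) (fun a b c => φ a b c + t * χ a b c) (fun a b c => φ a b c + t * χ a b c)
               + a2 * cP2 (fun a b c => φ a b c + t * χ a b c) (fun a b c => φ a b c + t * χ a b c) (fun a b c => φ a b c + t * χ a b c) (fun a b c => φ a b c + t * χ a b c)
               + a3 * cP3 (fun a b c => φ a b c + t * χ a b c) (fun a b c => φ a b c + t * χ a b c) (fun a b c => φ a b c + t * χ a b c) (fun a b c => φ a b c + t * χ a b c))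
          + lt / (4 * (N : ℝ) ^ ((3 : ℝ) / 2)) *
              cT (fun a b c => φ a b c + t * χ a b c) (fun a b c => φ a b c + t * χ a b c) (fun a b c => φ a b c + t * χ a b c) (fun a b c => φ a b c + t * χ a b c)) := by
    funext t; rw [potV_eq]
  rw [e]
  have hS2 : HasDerivAt (fun t : ℝ => cS2 (fun a b c => φ a b c + t * χ a b c))
      (2 * cB φ χ) 0 :=
    hd_sum_sq (fun i : Fin N × Fin N × Fin N => φ i.1 i.2.1 i.2.2)
      (fun i => χ i.1 i.2.1 i.2.2)
  have hS2sq : HasDerivAt (fun t : ℝ => (cS2 (fun a b c => φ a b c + t * χ a b c)) ^ 2)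
      (2 * cS2 φ * (2 * cB φ χ)) 0 := by
    have H := hS2.fun_pow 2
    refine H.congr_deriv (Eq.symm ?_)
    have : cS2 (fun a b c => φ a b c + (0:ℝ) * χ a b c) = cS2 φ := by
      simp [cS2]
    simp only [this]
    norm_num
  have hP1 : HasDerivAt (fun t : ℝ => cP1 (fun a b c => φ a b c + t * χ a b c) (fun a b c => φ a b c + t * χ a b c) (fun a b c => φ a b c + t * χ a b c) (fun a b c => φ a b c + t * χ a b c))
      (cP1 χ φ φ φ + cP1 φ χ φ φ + cP1 φ φ χ φ + cP1 φ φ φ χ) 0 :=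
    hd_sum_quad _ _ _ _ _ _ _ _
  have hP2 : HasDerivAt (fun t : ℝ => cP2 (fun a b c => φ a b c + t * χ a b c) (fun a b c => φ a b c + t * χ a b c) (fun a b c => φ a b c + t * χ a b c) (fun a b c => φ a b c + t * χ a b c))
      (cP2 χ φ φ φ + cP2 φ χ φ φ + cP2 φ φ χ φ + cP2 φ φ φ χ) 0 :=
    hd_sum_quad _ _ _ _ _ _ _ _
  have hP3 : HasDerivAt (fun t : ℝ => cP3 (fun a b c => φ a b c + t * χ a b c) (fun a b c => φ a b c + t * χ a b c) (fun a b c => φ a b c + t * χ a b c) (fun a b c => φ a b c + t * χ a b c))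
      (cP3 χ φ φ φ + cP3 φ χ φ φ + cP3 φ φ χ φ + cP3 φ φ φ χ) 0 :=
    hd_sum_quad _ _ _ _ _ _ _ _
  have hT : HasDerivAt (fun t : ℝ => cT (fun a b c => φ a b c + t * χ a b c) (fun a b c => φ a b c + t * χ a b c) (fun a b c => φ a b c + t * χ a b c) (fun a b c => φ a b c + t * χ a b c))
      (cT χ φ φ φ + cT φ χ φ φ + cT φ φ χ φ + cT φ φ φ χ) 0 :=
    hd_sum_quad _ _ _ _ _ _ _ _
  exact (((hS2.const_mul (l2 / 2)).add (hS2sq.const_mul (ld / (4 * (N : ℝ) ^ 3)))).add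
      (((((hP1.const_mul a1).add (hP2.const_mul a2)).add (hP3.const_mul a3))).const_mul
        (lp / (4 * (N : ℝ) ^ 2)))).add
    ((hT).const_mul (lt / (4 * (N : ℝ) ^ ((3 : ℝ) / 2))))

lemma hd_outer (φ χ δ : Fin N → Fin N → Fin N → ℝ) :
    HasDerivAt (fun s : ℝ => gradE (N := N) l2 ld lp lt a1 a2 a3
        (fun a b c => φ a b c + s * δ a b c) χ)
      (hessE (N := N) l2 ld lp lt a1 a2 a3 φ χ δ) 0 := by
  have hB : HasDerivAt (fun s : ℝ => cB (fun a b c => φ a b c + s * δ a b c) χ)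
      (cB δ χ) 0 :=
    hd_sum_lin (fun i : Fin N × Fin N × Fin N => φ i.1 i.2.1 i.2.2)
      (fun i => δ i.1 i.2.1 i.2.2) (fun i => χ i.1 i.2.1 i.2.2)
  have hmul : HasDerivAt (fun s : ℝ =>
        2 * cS2 (fun a b c => φ a b c + s * δ a b c)
          * (2 * cB (fun a b c => φ a b c + s * δ a b c) χ))
      (2 * (2 * cB φ δ) * (2 * cB φ χ) + 2 * cS2 φ * (2 * cB δ χ)) 0 := by
    have hS : HasDerivAt (fun s : ℝ => cS2 (fun a b c => φ a b c + s * δ a b c))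
        (2 * cB φ δ) 0 :=
      hd_sum_sq (fun i : Fin N × Fin N × Fin N => φ i.1 i.2.1 i.2.2)
        (fun i => δ i.1 i.2.1 i.2.2)
    have H := (hS.const_mul 2).fun_mul (hB.const_mul 2)
    refine H.congr_deriv (Eq.symm ?_)
    have e1 : cS2 (fun a b c => φ a b c + (0:ℝ) * δ a b c) = cS2 φ := by simp [cS2]
    have e2 : cB (fun a b c => φ a b c + (0:ℝ) * δ a b c) χ = cB φ χ := by simp [cB]
    simp only [e1, e2]
  have hP1g : HasDerivAt (fun s : ℝ =>
        cP1 χ (fun a b c => φ a b c + s * δ a b c) (fun a b c => φ a b c + s * δ a b c) (fun a b c => φ a b c + s * δ a b c)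
        + cP1 (fun a b c => φ a b c + s * δ a b c) χ (fun a b c => φ a b c + s * δ a b c) (fun a b c => φ a b c + s * δ a b c)
        + cP1 (fun a b c => φ a b c + s * δ a b c) (fun a b c => φ a b c + s * δ a b c) χ (fun a b c => φ a b c + s * δ a b c)
        + cP1 (fun a b c => φ a b c + s * δ a b c) (fun a b c => φ a b c + s * δ a b c) (fun a b c => φ a b c + s * δ a b c) χ)
      ((cP1 χ δ φ φ + cP1 χ φ δ φ + cP1 χ φ φ δ)
        + (cP1 δ χ φ φ + cP1 φ χ δ φ + cP1 φ χ φ δ)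
        + (cP1 δ φ χ φ + cP1 φ δ χ φ + cP1 φ φ χ δ)
        + (cP1 δ φ φ χ + cP1 φ δ φ χ + cP1 φ φ δ χ)) 0 :=
    (((hd_sum_quad1 _ _ _ _ _ _ _).add (hd_sum_quad2 _ _ _ _ _ _ _)).add
      (hd_sum_quad3 _ _ _ _ _ _ _)).add (hd_sum_quad4 _ _ _ _ _ _ _)
  have hP2g : HasDerivAt (fun s : ℝ =>
        cP2 χ (fun a b c => φ a b c + s * δ a b c) (fun a b c => φ a b c + s * δ a b c) (fun a b c => φ a b c + s * δ a b c)
        + cP2 (fun a b c => φ a b c + s * δ a b c) χ (fun a b c => φ a b c + s * δ a b c) (fun a b c => φ a b c + s * δ a b c)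
        + cP2 (fun a b c => φ a b c + s * δ a b c) (fun a b c => φ a b c + s * δ a b c) χ (fun a b c => φ a b c + s * δ a b c)
        + cP2 (fun a b c => φ a b c + s * δ a b c) (fun a b c => φ a b c + s * δ a b c) (fun a b c => φ a b c + s * δ a b c) χ)
      ((cP2 χ δ φ φ + cP2 χ φ δ φ + cP2 χ φ φ δ)
        + (cP2 δ χ φ φ + cP2 φ χ δ φ + cP2 φ χ φ δ)
        + (cP2 δ φ χ φ + cP2 φ δ χ φ + cP2 φ φ χ δ)
        + (cP2 δ φ φ χ + cP2 φ δ φ χ + cP2 φ φ δ χ)) 0 :=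
    (((hd_sum_quad1 _ _ _ _ _ _ _).add (hd_sum_quad2 _ _ _ _ _ _ _)).add
      (hd_sum_quad3 _ _ _ _ _ _ _)).add (hd_sum_quad4 _ _ _ _ _ _ _)
  have hP3g : HasDerivAt (fun s : ℝ =>
        cP3 χ (fun a b c => φ a b c + s * δ a b c) (fun a b c => φ a b c + s * δ a b c) (fun a b c => φ a b c + s * δ a b c)
        + cP3 (fun a b c => φ a b c + s * δ a b c) χ (fun a b c => φ a b c + s * δ a b c) (fun a b c => φ a b c + s * δ a b c)
        + cP3 (fun a b c => φ a b c + s * δ a b c) (fun a b c => φ a b c + s * δ a b c) χ (fun a b c => φ a b c + s * δ a b c)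
        + cP3 (fun a b c => φ a b c + s * δ a b c) (fun a b c => φ a b c + s * δ a b c) (fun a b c => φ a b c + s * δ a b c) χ)
      ((cP3 χ δ φ φ + cP3 χ φ δ φ + cP3 χ φ φ δ)
        + (cP3 δ χ φ φ + cP3 φ χ δ φ + cP3 φ χ φ δ)
        + (cP3 δ φ χ φ + cP3 φ δ χ φ + cP3 φ φ χ δ)
        + (cP3 δ φ φ χ + cP3 φ δ φ χ + cP3 φ φ δ χ)) 0 :=
    (((hd_sum_quad1 _ _ _ _ _ _ _).add (hd_sum_quad2 _ _ _ _ _ _ _)).add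
      (hd_sum_quad3 _ _ _ _ _ _ _)).add (hd_sum_quad4 _ _ _ _ _ _ _)
  have hTg : HasDerivAt (fun s : ℝ =>
        cT χ (fun a b c => φ a b c + s * δ a b c) (fun a b c => φ a b c + s * δ a b c) (fun a b c => φ a b c + s * δ a b c)
        + cT (fun a b c => φ a b c + s * δ a b c) χ (fun a b c => φ a b c + s * δ a b c) (fun a b c => φ a b c + s * δ a b c)
        + cT (fun a b c => φ a b c + s * δ a b c) (fun a b c => φ a b c + s * δ a b c) χ (fun a b c => φ a b c + s * δ a b c)
        + cT (fun a b c => φ a b c + s * δ a b c) (fun a b c => φ a b c + s * δ a b c) (fun a b c => φ a b c + s * δ a b c) χ)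
      ((cT χ δ φ φ + cT χ φ δ φ + cT χ φ φ δ)
        + (cT δ χ φ φ + cT φ χ δ φ + cT φ χ φ δ)
        + (cT δ φ χ φ + cT φ δ χ φ + cT φ φ χ δ)
        + (cT δ φ φ χ + cT φ δ φ χ + cT φ φ δ χ)) 0 :=
    (((hd_sum_quad1 _ _ _ _ _ _ _).add (hd_sum_quad2 _ _ _ _ _ _ _)).add
      (hd_sum_quad3 _ _ _ _ _ _ _)).add (hd_sum_quad4 _ _ _ _ _ _ _)
  exact ((((hB.const_mul 2).const_mul (l2 / 2)).add
      (hmul.const_mul (ld / (4 * (N : ℝ) ^ 3)))).add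
      ((((hP1g.const_mul a1).add (hP2g.const_mul a2)).add (hP3g.const_mul a3)).const_mul
        (lp / (4 * (N : ℝ) ^ 2)))).add
    (hTg.const_mul (lt / (4 * (N : ℝ) ^ ((3 : ℝ) / 2))))

lemma hess_eq (φ χ : Fin N → Fin N → Fin N → ℝ) (a b c : Fin N) :
    hessApply N l2 ld lp lt a1 a2 a3 φ χ a b c
      = hessE (N := N) l2 ld lp lt a1 a2 a3 φ χ
          (fun a' b' c' => if a' = a ∧ b' = b ∧ c' = c then (1 : ℝ) else 0) := by
  set δ : Fin N → Fin N → Fin N → ℝ :=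
    fun a' b' c' => if a' = a ∧ b' = b ∧ c' = c then (1 : ℝ) else 0 with hδ
  have inner : ∀ s : ℝ,
      deriv (fun t : ℝ => potV N l2 ld lp lt a1 a2 a3
        (fun a' b' c' => φ a' b' c' + t * χ a' b' c' + s * δ a' b' c')) 0
      = gradE (N := N) l2 ld lp lt a1 a2 a3
          (fun a' b' c' => φ a' b' c' + s * δ a' b' c') χ := by
    intro s
    have e : (fun t : ℝ => potV N l2 ld lp lt a1 a2 a3
        (fun a' b' c' => φ a' b' c' + t * χ a' b' c' + s * δ a' b' c'))
        = (fun t : ℝ => potV N l2 ld lp lt a1 a2 a3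
            (fun a' b' c' => (φ a' b' c' + s * δ a' b' c') + t * χ a' b' c')) := by
      funext t; congr 1; funext p q r; ring
    rw [e, (hd_inner l2 ld lp lt a1 a2 a3 _ χ).deriv]
  show deriv (fun s : ℝ => deriv (fun t : ℝ => potV N l2 ld lp lt a1 a2 a3
      (fun a' b' c' => φ a' b' c' + t * χ a' b' c' + s * δ a' b' c')) 0) 0 = _
  rw [show (fun s : ℝ => deriv (fun t : ℝ => potV N l2 ld lp lt a1 a2 a3
      (fun a' b' c' => φ a' b' c' + t * χ a' b' c' + s * δ a' b' c')) 0)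
      = (fun s : ℝ => gradE (N := N) l2 ld lp lt a1 a2 a3
          (fun a' b' c' => φ a' b' c' + s * δ a' b' c') χ) from funext inner]
  exact (hd_outer l2 ld lp lt a1 a2 a3 φ χ δ).deriv

lemma delta_eq (a b c : Fin N) :
    (fun a' b' c' => if a' = a ∧ b' = b ∧ c' = c then (1 : ℝ) else 0)
      = (fun a' b' c' => (if a' = a then (1 : ℝ) else 0)
          * (if b' = b then (1 : ℝ) else 0) * (if c' = c then (1 : ℝ) else 0)) := by
  funext p q r
  by_cases h1 : p = a <;> by_cases h2 : q = b <;> by_cases h3 : r = c <;> simp [h1, h2, h3]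

lemma sum_e_mul (a : Fin N) (f : Fin N → ℝ) :
    ∑ x, (if x = a then (1 : ℝ) else 0) * f x = f a := by simp

lemma sum_mul_e (a : Fin N) (f : Fin N → ℝ) :
    ∑ x, f x * (if x = a then (1 : ℝ) else 0) = f a := by simp

lemma sum_e_sq (a : Fin N) :
    ∑ x, (if x = a then (1 : ℝ) else 0) ^ 2 = 1 := by simp

end TensorAux

/-- At a rank-one solution `φ = u ⊗ v ⊗ w`, the Hessian of `V` annihilates the Goldstone
directions `u' ⊗ v ⊗ w`, `u ⊗ v' ⊗ w`, `u ⊗ v ⊗ w'` with `u' ⊥ u`, `v' ⊥ v`, `w' ⊥ w`. -/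
theorem rank_one_goldstone_modes (N : ℕ) (hN : 1 ≤ N)
    (l2 ld lp lt a1 a2 a3 : ℝ)
    (u v w : Fin N → ℝ)
    (φ : Fin N → Fin N → Fin N → ℝ) (hφ : φ = fun a b c => u a * v b * w c)
    (D : ℝ)
    (hD : D = ld + lp * (N : ℝ) * (a1 + a2 + a3) + lt * (N : ℝ) ^ ((3 : ℝ) / 2))
    (hsol : l2 + D / (N : ℝ) ^ 3 *
      ((∑ a, (u a) ^ 2) * (∑ b, (v b) ^ 2) * (∑ c, (w c) ^ 2)) = 0) :
    (∀ u' : Fin N → ℝ, (∑ a, u' a * u a) = 0 →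
      hessApply N l2 ld lp lt a1 a2 a3 φ (fun a b c => u' a * v b * w c) = 0)
    ∧ (∀ v' : Fin N → ℝ, (∑ b, v' b * v b) = 0 →
      hessApply N l2 ld lp lt a1 a2 a3 φ (fun a b c => u a * v' b * w c) = 0)
    ∧ (∀ w' : Fin N → ℝ, (∑ c, w' c * w c) = 0 →
      hessApply N l2 ld lp lt a1 a2 a3 φ (fun a b c => u a * v b * w' c) = 0) := by
  have hNpos : (0:ℝ) < (N:ℝ) := by exact_mod_cast hN
  have hA : (N:ℝ) ^ ((3:ℝ)/2) * (N:ℝ) ^ ((3:ℝ)/2) = (N:ℝ) ^ 3 := by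
    rw [← Real.rpow_add hNpos]
    norm_num
  have hAne : (N:ℝ) ^ ((3:ℝ)/2) ≠ 0 := ne_of_gt (Real.rpow_pos_of_pos hNpos _)
  have hNne : (N:ℝ) ≠ 0 := ne_of_gt hNpos
  have hl2 : l2 = -(D / (N:ℝ)^3 * ((∑ a, u a ^ 2) * (∑ b, v b ^ 2) * (∑ c, w c ^ 2))) := by
    linarith [hsol]
  have hlt : lt / (4 * (N:ℝ) ^ ((3:ℝ)/2)) = lt * (N:ℝ) ^ ((3:ℝ)/2) / (4 * (N:ℝ)^3) := by
    rw [div_eq_div_iff (by positivity) (by positivity)]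
    linear_combination (-4*lt) * hA
  have eU : (∑ x, u x * u x) = ∑ x, u x ^ 2 :=
    Finset.sum_congr rfl fun x _ => (pow_two (u x)).symm
  have eV : (∑ x, v x * v x) = ∑ x, v x ^ 2 :=
    Finset.sum_congr rfl fun x _ => (pow_two (v x)).symm
  have eW : (∑ x, w x * w x) = ∑ x, w x ^ 2 :=
    Finset.sum_congr rfl fun x _ => (pow_two (w x)).symm
  refine ⟨?_, ?_, ?_⟩
  · intro u' ho
    funext a b c
    rw [hφ]
    show hessApply N l2 ld lp lt a1 a2 a3 _ _ a b c = 0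
    rw [TensorAux.hess_eq, TensorAux.delta_eq]
    simp only [TensorAux.hessE, TensorAux.cP1_eval, TensorAux.cP2_eval, TensorAux.cP3_eval,
      TensorAux.cT_eval, TensorAux.cB_eval, TensorAux.cS2_eval,
      TensorAux.sum_e_mul, TensorAux.sum_mul_e]
    have ho2 : (∑ x, u x * u' x) = 0 := by
      rw [← ho]; exact Finset.sum_congr rfl fun x _ => mul_comm _ _
    simp only [ho, ho2, eU, eV, eW, mul_zero, zero_mul, add_zero, zero_add]
    rw [hlt, hl2, hD]
    field_simp
    ring
  · intro v' ho
    funext a b c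
    rw [hφ]
    show hessApply N l2 ld lp lt a1 a2 a3 _ _ a b c = 0
    rw [TensorAux.hess_eq, TensorAux.delta_eq]
    simp only [TensorAux.hessE, TensorAux.cP1_eval, TensorAux.cP2_eval, TensorAux.cP3_eval,
      TensorAux.cT_eval, TensorAux.cB_eval, TensorAux.cS2_eval,
      TensorAux.sum_e_mul, TensorAux.sum_mul_e]
    have ho2 : (∑ x, v x * v' x) = 0 := by
      rw [← ho]; exact Finset.sum_congr rfl fun x _ => mul_comm _ _
    simp only [ho, ho2, eU, eV, eW, mul_zero, zero_mul, add_zero, zero_add]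
    rw [hlt, hl2, hD]
    field_simp
    ring
  · intro w' ho
    funext a b c
    rw [hφ]
    show hessApply N l2 ld lp lt a1 a2 a3 _ _ a b c = 0
    rw [TensorAux.hess_eq, TensorAux.delta_eq]
    simp only [TensorAux.hessE, TensorAux.cP1_eval, TensorAux.cP2_eval, TensorAux.cP3_eval,
      TensorAux.cT_eval, TensorAux.cB_eval, TensorAux.cS2_eval,
      TensorAux.sum_e_mul, TensorAux.sum_mul_e]
    have ho2 : (∑ x, w x * w' x) = 0 := by
      rw [← ho]; exact Finset.sum_congr rfl fun x _ => mul_comm _ _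
    simp only [ho, ho2, eU, eV, eW, mul_zero, zero_mul, add_zero, zero_add]
    rw [hlt, hl2, hD]
    field_simp
    ring
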